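/- Let u_k' be a sequence of functions on ℂ converging weakly in W^{1,2}_{loc} to a harmonic function u', with −Δu_k' = K_k e^{2u_k'} where K_k e^{2u_k'} → 0 in L¹_{loc}, and suppose ∫_{D₁} |∇u_k'|² ≥ ε₀² for all k and u_k' → u' strongly in L²_{loc} with u' constant. Then ε₀² ≤ limsup_k ∫_ℂ η|∇u_k'|² = 0 for a cutoff η ∈ C_c^∞ with η ≡ 1 on D₁, a contradiction; i.e. under these hypotheses no such sequence exists. -/

import Mathlib

open Real MeasureTheory Metric Filter

/-- The Laplacian on `ℂ ≅ ℝ²`, as the sum of the second derivatives in the directions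
`1` and `I`. -/
noncomputable def lapC (u : ℂ → ℝ) (z : ℂ) : ℝ :=
  (fderiv ℝ (fun w => fderiv ℝ u w 1) z) 1 +
    (fderiv ℝ (fun w => fderiv ℝ u w Complex.I) z) Complex.I

lemma st18_integrable {h : ℂ → ℝ} (hc : Continuous h) (hs : ∀ z : ℂ, 3 ≤ ‖z‖ → h z = 0) :
    Integrable h := by
  apply hc.integrable_of_hasCompactSupport
  apply HasCompactSupport.intro (isCompact_closedBall (0:ℂ) 3)
  intro z hz
  exact hs z (le_of_lt (by simpa [Metric.mem_closedBall, dist_eq_norm] using hz))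

lemma st18_int_eq_ball {h : ℂ → ℝ} (hs : ∀ z : ℂ, 3 ≤ ‖z‖ → h z = 0) :
    ∫ z, h z = ∫ z in ball (0:ℂ) 3, h z := by
  refine (setIntegral_eq_integral_of_forall_compl_eq_zero fun z hz => hs z ?_).symm
  simpa [Metric.mem_ball, dist_eq_norm, not_lt] using hz

lemma st18_intOn {h : ℂ → ℝ} (hc : Continuous h) (r : ℝ) : IntegrableOn h (ball (0:ℂ) r) :=
  (hc.continuousOn.integrableOn_compact (isCompact_closedBall (0:ℂ) r)).mono_set
    ball_subset_closedBall

lemma st18_memL2 {f : ℂ → ℝ} (hf : Continuous f) :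
    MemLp f (ENNReal.ofReal 2) (volume.restrict (ball (0:ℂ) 3)) := by
  haveI : IsFiniteMeasure (volume.restrict (ball (0:ℂ) 3)) :=
    ⟨by rw [Measure.restrict_apply_univ]; exact measure_ball_lt_top⟩
  obtain ⟨M, hM⟩ := (isCompact_closedBall (0:ℂ) 3).exists_bound_of_continuousOn hf.continuousOn
  exact MemLp.of_bound hf.aestronglyMeasurable.restrict M <|
    (ae_restrict_iff' measurableSet_ball).2 (Filter.Eventually.of_forall
      fun z hz => hM z (ball_subset_closedBall hz))

lemma st18_CS {f g : ℂ → ℝ} (hf : Continuous f) (hg : Continuous g) :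
    ∫ z in ball (0:ℂ) 3, |f z| * |g z| ≤
      Real.sqrt (∫ z in ball (0:ℂ) 3, f z ^ 2) * Real.sqrt (∫ z in ball (0:ℂ) 3, g z ^ 2) := by
  have h2 : (2:ℝ).HolderConjugate 2 := Real.holderConjugate_iff.mpr ⟨one_lt_two, by norm_num⟩
  have := integral_mul_le_Lp_mul_Lq_of_nonneg h2
      (Filter.Eventually.of_forall (fun z => abs_nonneg (f z)))
      (Filter.Eventually.of_forall (fun z => abs_nonneg (g z)))
      (st18_memL2 hf.abs) (st18_memL2 hg.abs)
  calc ∫ z in ball (0:ℂ) 3, |f z| * |g z|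
      ≤ (∫ z in ball (0:ℂ) 3, |f z| ^ (2:ℝ)) ^ (1/(2:ℝ)) *
        (∫ z in ball (0:ℂ) 3, |g z| ^ (2:ℝ)) ^ (1/(2:ℝ)) := this
    _ = Real.sqrt (∫ z in ball (0:ℂ) 3, f z ^ 2) * Real.sqrt (∫ z in ball (0:ℂ) 3, g z ^ 2) := by
        rw [Real.sqrt_eq_rpow, Real.sqrt_eq_rpow]
        congr 2 <;> · apply integral_congr_ae; filter_upwards with z; rw [Real.rpow_two, sq_abs]

lemma st18_grad {f : ℂ → ℝ} (h : Differentiable ℝ f) (z : ℂ) :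
    ‖gradient f z‖ ^ 2 = (fderiv ℝ f z 1) ^ 2 + (fderiv ℝ f z Complex.I) ^ 2 := by
  have h1 : fderiv ℝ f z = InnerProductSpace.toDualMap ℝ ℂ (gradient f z) :=
    (hasGradientAt_iff_hasFDerivAt.1 (h z).hasGradientAt).fderiv
  rw [h1]
  simp [InnerProductSpace.toDualMap_apply_apply, real_inner_eq_re_inner (𝕜 := ℂ),
    Complex.inner, ← Complex.sq_norm, Complex.sq_norm,
    Complex.normSq_apply]
  ring

lemma st18_fderiv_zero {f : ℂ → ℝ} {z : ℂ} (h : ∀ w ∈ ball z 1, f w = 0) : fderiv ℝ f z = 0 := by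
  have : f =ᶠ[nhds z] (fun _ => 0) := Filter.eventuallyEq_of_mem (ball_mem_nhds z one_pos) h
  rw [this.fderiv_eq]; simp

lemma st18_norm_ge {z w : ℂ} (hz : 3 ≤ ‖z‖) (hw : w ∈ ball z 1) : 2 ≤ ‖w‖ := by
  have h1 : dist w z < 1 := hw
  have h2 : ‖z‖ - ‖w‖ ≤ ‖z - w‖ := by simpa using norm_sub_norm_le z w
  rw [dist_eq_norm, ← norm_neg] at h1
  simp only [neg_sub] at h1
  linarith

lemma st18_contP {f : ℂ → ℝ} (hf : ContDiff ℝ 2 f) (v : ℂ) :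
    ContDiff ℝ 1 fun z => fderiv ℝ f z v :=
  (hf.fderiv_right (m := 1) (by norm_num)).clm_apply contDiff_const

lemma st18_contQ {f : ℂ → ℝ} (hf : ContDiff ℝ 2 f) (v w : ℂ) :
    Continuous fun z => fderiv ℝ (fun y => fderiv ℝ f y v) z w :=
  ((((st18_contP hf v).fderiv_right (m := 0) le_rfl)).clm_apply contDiff_const).continuous

lemma st18_abs_int (f : ℂ → ℝ) (s : Set ℂ) :
    |∫ z in s, f z| ≤ ∫ z in s, |f z| := by
  simpa [Real.norm_eq_abs] using
    norm_integral_le_integral_norm (μ := volume.restrict s) f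


lemma st18_lower (η : ℂ → ℝ) (hηc : Continuous η) (hηnn : ∀ z, 0 ≤ η z)
    (hηone : ∀ z ∈ ball (0:ℂ) 1, η z = 1) (hη02 : ∀ z : ℂ, 2 ≤ ‖z‖ → η z = 0)
    (w : ℂ → ℝ) (hw : ContDiff ℝ 2 w) :
    (∫ z in ball (0:ℂ) 1, ‖gradient w z‖ ^ 2) ≤
      ∫ z, η z * ((fderiv ℝ w z 1) ^ 2 + (fderiv ℝ w z Complex.I) ^ 2) := by
  have hwd : Differentiable ℝ w := hw.differentiable two_ne_zero
  have hcont : Continuous fun z => (fderiv ℝ w z 1) ^ 2 + (fderiv ℝ w z Complex.I) ^ 2 :=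
    (((st18_contP hw 1).continuous).pow 2).add (((st18_contP hw Complex.I).continuous).pow 2)
  have h1 : (∫ z in ball (0:ℂ) 1, ‖gradient w z‖ ^ 2) =
      ∫ z in ball (0:ℂ) 1, η z * ((fderiv ℝ w z 1) ^ 2 + (fderiv ℝ w z Complex.I) ^ 2) := by
    refine setIntegral_congr_fun measurableSet_ball fun z hz => ?_
    rw [st18_grad hwd z, hηone z hz, one_mul]
  rw [h1]
  exact setIntegral_le_integral
    (st18_integrable (hηc.mul hcont) (fun z hz => by rw [hη02 z (by linarith), zero_mul]))
    (Filter.Eventually.of_forall fun z => mul_nonneg (hηnn z) (by positivity))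

lemma st18_upper (η : ℂ → ℝ) (hηsm : ContDiff ℝ 2 η) (hηnn : ∀ z, 0 ≤ η z) (hηle : ∀ z, η z ≤ 1)
    (hη02 : ∀ z : ℂ, 2 ≤ ‖z‖ → η z = 0)
    (Mη : ℝ) (hMη0 : 0 ≤ Mη) (hMηv : ∀ (z v : ℂ), ‖v‖ = 1 → |fderiv ℝ η z v| ≤ Mη)
    (w Kf : ℂ → ℝ) (hw : ContDiff ℝ 2 w)
    (heqw : ∀ z, -lapC w z = Kf z * Real.exp (2 * w z))
    (c C₃ Cg : ℝ) (hC₃ : ∀ z ∈ ball (0:ℂ) 3, |w z| ≤ C₃)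
    (hCg : (∫ z in ball (0:ℂ) 3, ‖gradient w z‖ ^ 2) ≤ Cg) :
    |∫ z, η z * ((fderiv ℝ w z 1) ^ 2 + (fderiv ℝ w z Complex.I) ^ 2)| ≤
      C₃ * (∫ z in ball (0:ℂ) 3, |Kf z| * Real.exp (2 * w z))
      + |c| * (∫ z in ball (0:ℂ) 3, |Kf z| * Real.exp (2 * w z))
      + (Mη * Real.sqrt Cg) * Real.sqrt (∫ z in ball (0:ℂ) 3, (w z - c) ^ 2)
      + (Mη * Real.sqrt Cg) * Real.sqrt (∫ z in ball (0:ℂ) 3, (w z - c) ^ 2) := by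
  -- regularity
  have hwd : Differentiable ℝ w := hw.differentiable two_ne_zero
  have hwc : Continuous w := hw.continuous
  have hηd : Differentiable ℝ η := hηsm.differentiable two_ne_zero
  have hηc : Continuous η := hηsm.continuous
  have hηw : ContDiff ℝ 2 (fun z => η z * w z) := hηsm.mul hw
  have hη'c : ∀ v : ℂ, Continuous fun z => fderiv ℝ η z v := fun v => (st18_contP hηsm v).continuous
  have hPc : ∀ v : ℂ, Continuous fun z => fderiv ℝ w z v := fun v => (st18_contP hw v).continuous
  have hPd : ∀ v : ℂ, Differentiable ℝ fun z => fderiv ℝ w z v :=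
    fun v => (st18_contP hw v).differentiable one_ne_zero
  have hQc : ∀ v : ℂ, Continuous fun z => fderiv ℝ (fun y => fderiv ℝ w y v) z v :=
    fun v => st18_contQ hw v v
  have hηwfc : ∀ v : ℂ, Continuous fun z => fderiv ℝ (fun y => η y * w y) z v :=
    fun v => (st18_contP hηw v).continuous
  have hLc : Continuous fun z => fderiv ℝ (fun y => fderiv ℝ w y 1) z 1 +
      fderiv ℝ (fun y => fderiv ℝ w y Complex.I) z Complex.I := (hQc 1).add (hQc Complex.I)
  -- vanishing
  have hη03 : ∀ z : ℂ, 3 ≤ ‖z‖ → η z = 0 := fun z hz => hη02 z (by linarith)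
  have hη'03 : ∀ z : ℂ, 3 ≤ ‖z‖ → fderiv ℝ η z = 0 := fun z hz =>
    st18_fderiv_zero fun y hy => hη02 y (st18_norm_ge hz hy)
  have hηw0 : ∀ z : ℂ, 3 ≤ ‖z‖ → fderiv ℝ (fun y => η y * w y) z = 0 := fun z hz =>
    st18_fderiv_zero fun y hy => by rw [hη02 y (st18_norm_ge hz hy), zero_mul]
  -- pointwise identities
  have hKL : ∀ z, Kf z * Real.exp (2 * w z) =
      -(fderiv ℝ (fun y => fderiv ℝ w y 1) z 1 +
        fderiv ℝ (fun y => fderiv ℝ w y Complex.I) z Complex.I) := by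
    intro z; rw [← heqw z]; rfl
  have hprod : ∀ (v z : ℂ), fderiv ℝ (fun y => η y * w y) z v =
      η z * fderiv ℝ w z v + w z * fderiv ℝ η z v := fun v z => by
    rw [fderiv_fun_mul (hηd z) (hwd z)]; simp
  -- integrability
  have Ia : ∀ v : ℂ, Integrable fun z => fderiv ℝ (fun y => η y * w y) z v * fderiv ℝ w z v :=
    fun v => st18_integrable ((hηwfc v).mul (hPc v))
      (fun z hz => by rw [hηw0 z hz]; simp)
  have Ib : ∀ v : ℂ, Integrable fun z => η z * w z *
      fderiv ℝ (fun y => fderiv ℝ w y v) z v := fun v =>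
    st18_integrable ((hηc.mul hwc).mul (hQc v)) (fun z hz => by rw [hη03 z hz]; ring)
  have Ic : ∀ v : ℂ, Integrable fun z => η z * w z * fderiv ℝ w z v := fun v =>
    st18_integrable ((hηc.mul hwc).mul (hPc v)) (fun z hz => by rw [hη03 z hz]; ring)
  have Id : ∀ v : ℂ, Integrable fun z => fderiv ℝ η z v * fderiv ℝ w z v := fun v =>
    st18_integrable ((hη'c v).mul (hPc v)) (fun z hz => by rw [hη'03 z hz]; simp)
  have Ie : ∀ v : ℂ, Integrable fun z => η z * fderiv ℝ (fun y => fderiv ℝ w y v) z v := fun v =>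
    st18_integrable (hηc.mul (hQc v)) (fun z hz => by rw [hη03 z hz]; ring)
  have If : ∀ v : ℂ, Integrable fun z => η z * fderiv ℝ w z v := fun v =>
    st18_integrable (hηc.mul (hPc v)) (fun z hz => by rw [hη03 z hz]; ring)
  have Ig : ∀ v : ℂ, Integrable fun z => η z * fderiv ℝ w z v * fderiv ℝ w z v := fun v =>
    st18_integrable ((hηc.mul (hPc v)).mul (hPc v)) (fun z hz => by rw [hη03 z hz]; ring)
  have Ih : ∀ v : ℂ, Integrable fun z => w z * fderiv ℝ η z v * fderiv ℝ w z v := fun v =>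
    st18_integrable (((hwc.mul (hη'c v))).mul (hPc v))
      (fun z hz => by rw [hη'03 z hz]; simp)
  have Ii : ∀ v : ℂ, Integrable fun z => (w z - c) * fderiv ℝ η z v * fderiv ℝ w z v := fun v =>
    st18_integrable ((((hwc.sub continuous_const).mul (hη'c v))).mul (hPc v))
      (fun z hz => by rw [hη'03 z hz]; simp)
  -- integration by parts
  have ibp1 : ∀ v : ℂ, (∫ z, η z * w z * fderiv ℝ (fun y => fderiv ℝ w y v) z v) =
      -∫ z, fderiv ℝ (fun y => η y * w y) z v * fderiv ℝ w z v := fun v =>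
    integral_mul_fderiv_eq_neg_fderiv_mul_of_integrable (Ia v) (Ib v) (Ic v)
      (fun x _ => (hηd.mul hwd) x) (fun x _ => hPd v x)
  have ibp2 : ∀ v : ℂ, (∫ z, η z * fderiv ℝ (fun y => fderiv ℝ w y v) z v) =
      -∫ z, fderiv ℝ η z v * fderiv ℝ w z v := fun v =>
    integral_mul_fderiv_eq_neg_fderiv_mul_of_integrable (Id v) (Ie v) (If v) (fun x _ => hηd x) (fun x _ => hPd v x)
  -- split the first RHS
  have hsplit1 : ∀ v : ℂ, (∫ z, fderiv ℝ (fun y => η y * w y) z v * fderiv ℝ w z v) =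
      (∫ z, η z * fderiv ℝ w z v * fderiv ℝ w z v) +
      ∫ z, w z * fderiv ℝ η z v * fderiv ℝ w z v := by
    intro v
    rw [← integral_add (Ig v) (Ih v)]
    apply integral_congr_ae
    filter_upwards with z
    rw [hprod v z]; ring
  -- split T into V + c * U
  have hT : ∀ v : ℂ, (∫ z, w z * fderiv ℝ η z v * fderiv ℝ w z v) =
      (∫ z, (w z - c) * fderiv ℝ η z v * fderiv ℝ w z v) +
      c * ∫ z, fderiv ℝ η z v * fderiv ℝ w z v := by
    intro v
    rw [← integral_const_mul, ← integral_add (Ii v) ((Id v).const_mul c)]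
    apply integral_congr_ae
    filter_upwards with z
    ring
  -- decomposition of the energy
  have hE : (∫ z, η z * ((fderiv ℝ w z 1) ^ 2 + (fderiv ℝ w z Complex.I) ^ 2)) =
      (∫ z, η z * fderiv ℝ w z 1 * fderiv ℝ w z 1) +
      ∫ z, η z * fderiv ℝ w z Complex.I * fderiv ℝ w z Complex.I := by
    rw [← integral_add (Ig 1) (Ig Complex.I)]
    apply integral_congr_ae
    filter_upwards with z
    ring
  -- sums over directions
  have hQsum : (∫ z, η z * w z * fderiv ℝ (fun y => fderiv ℝ w y 1) z 1) +
      (∫ z, η z * w z * fderiv ℝ (fun y => fderiv ℝ w y Complex.I) z Complex.I) =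
      ∫ z, η z * w z * (fderiv ℝ (fun y => fderiv ℝ w y 1) z 1 +
        fderiv ℝ (fun y => fderiv ℝ w y Complex.I) z Complex.I) := by
    rw [← integral_add (Ib 1) (Ib Complex.I)]
    apply integral_congr_ae; filter_upwards with z; ring
  have hQsum2 : (∫ z, η z * fderiv ℝ (fun y => fderiv ℝ w y 1) z 1) +
      (∫ z, η z * fderiv ℝ (fun y => fderiv ℝ w y Complex.I) z Complex.I) =
      ∫ z, η z * (fderiv ℝ (fun y => fderiv ℝ w y 1) z 1 +
        fderiv ℝ (fun y => fderiv ℝ w y Complex.I) z Complex.I) := by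
    rw [← integral_add (Ie 1) (Ie Complex.I)]
    apply integral_congr_ae; filter_upwards with z; ring
  -- energy identity
  have hEeq : (∫ z, η z * ((fderiv ℝ w z 1) ^ 2 + (fderiv ℝ w z Complex.I) ^ 2)) =
      -(∫ z, η z * w z * (fderiv ℝ (fun y => fderiv ℝ w y 1) z 1 +
          fderiv ℝ (fun y => fderiv ℝ w y Complex.I) z Complex.I))
      - (∫ z, (w z - c) * fderiv ℝ η z 1 * fderiv ℝ w z 1)
      - (∫ z, (w z - c) * fderiv ℝ η z Complex.I * fderiv ℝ w z Complex.I)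
      + c * ∫ z, η z * (fderiv ℝ (fun y => fderiv ℝ w y 1) z 1 +
          fderiv ℝ (fun y => fderiv ℝ w y Complex.I) z Complex.I) := by
    have h1 := ibp1 1
    have h2 := ibp1 Complex.I
    rw [hsplit1 1] at h1
    rw [hsplit1 Complex.I] at h2
    have h3 := ibp2 1
    have h4 := ibp2 Complex.I
    have h5 := hT 1
    have h6 := hT Complex.I
    have h7 : c * ((∫ z, η z * fderiv ℝ (fun y => fderiv ℝ w y 1) z 1) +
        (∫ z, η z * fderiv ℝ (fun y => fderiv ℝ w y Complex.I) z Complex.I)) =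
        c * ∫ z, η z * (fderiv ℝ (fun y => fderiv ℝ w y 1) z 1 +
          fderiv ℝ (fun y => fderiv ℝ w y Complex.I) z Complex.I) := by rw [hQsum2]
    rw [hE, ← hQsum]
    rw [h3, h4] at h7
    -- use linear arithmetic over the integral atoms
    have h8 : c * (∫ z, fderiv ℝ η z 1 * fderiv ℝ w z 1) +
        c * (∫ z, fderiv ℝ η z Complex.I * fderiv ℝ w z Complex.I) =
        - (c * ∫ z, η z * (fderiv ℝ (fun y => fderiv ℝ w y 1) z 1 +
          fderiv ℝ (fun y => fderiv ℝ w y Complex.I) z Complex.I)) := by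
      rw [← h7]; ring
    linarith [h1, h2, h5, h6, h8]
  -- rewriting of the L¹ quantity
  have hA : (∫ z in ball (0:ℂ) 3, |Kf z| * Real.exp (2 * w z)) =
      ∫ z in ball (0:ℂ) 3, |fderiv ℝ (fun y => fderiv ℝ w y 1) z 1 +
        fderiv ℝ (fun y => fderiv ℝ w y Complex.I) z Complex.I| := by
    apply integral_congr_ae
    filter_upwards with z
    rw [show |Kf z| * Real.exp (2 * w z) = |Kf z * Real.exp (2 * w z)| by
      rw [abs_mul, abs_of_pos (Real.exp_pos _)], hKL z, abs_neg]
  have hAnn : 0 ≤ ∫ z in ball (0:ℂ) 3, |Kf z| * Real.exp (2 * w z) := by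
    rw [hA]
    exact setIntegral_nonneg measurableSet_ball fun z _ => abs_nonneg _
  have hC₃0 : 0 ≤ C₃ := le_trans (abs_nonneg _) (hC₃ 0 (by simp))
  -- bound on the main term
  have hW1 : |∫ z, η z * w z * (fderiv ℝ (fun y => fderiv ℝ w y 1) z 1 +
      fderiv ℝ (fun y => fderiv ℝ w y Complex.I) z Complex.I)| ≤
      C₃ * ∫ z in ball (0:ℂ) 3, |Kf z| * Real.exp (2 * w z) := by
    rw [hA, st18_int_eq_ball (fun z hz => by rw [hη03 z hz]; ring)]
    calc |∫ z in ball (0:ℂ) 3, η z * w z * (fderiv ℝ (fun y => fderiv ℝ w y 1) z 1 +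
        fderiv ℝ (fun y => fderiv ℝ w y Complex.I) z Complex.I)|
        ≤ ∫ z in ball (0:ℂ) 3, |η z * w z * (fderiv ℝ (fun y => fderiv ℝ w y 1) z 1 +
          fderiv ℝ (fun y => fderiv ℝ w y Complex.I) z Complex.I)| :=
          st18_abs_int _ _
      _ ≤ ∫ z in ball (0:ℂ) 3, C₃ * |fderiv ℝ (fun y => fderiv ℝ w y 1) z 1 +
          fderiv ℝ (fun y => fderiv ℝ w y Complex.I) z Complex.I| := by
          apply setIntegral_mono_on
          · exact st18_intOn (((hηc.mul hwc).mul hLc).abs) 3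
          · exact st18_intOn (continuous_const.mul hLc.abs) 3
          · exact measurableSet_ball
          · intro z hz
            rw [abs_mul, abs_mul]
            calc |η z| * |w z| * |_| ≤ 1 * C₃ * |_| := by
                  apply mul_le_mul_of_nonneg_right _ (abs_nonneg _)
                  apply mul_le_mul _ (hC₃ z hz) (abs_nonneg _) zero_le_one
                  rw [abs_of_nonneg (hηnn z)]; exact hηle z
              _ = C₃ * |_| := by ring
      _ = C₃ * ∫ z in ball (0:ℂ) 3, |fderiv ℝ (fun y => fderiv ℝ w y 1) z 1 +
          fderiv ℝ (fun y => fderiv ℝ w y Complex.I) z Complex.I| := integral_const_mul _ _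
  -- bound on the c-term
  have hW2 : |∫ z, η z * (fderiv ℝ (fun y => fderiv ℝ w y 1) z 1 +
      fderiv ℝ (fun y => fderiv ℝ w y Complex.I) z Complex.I)| ≤
      ∫ z in ball (0:ℂ) 3, |Kf z| * Real.exp (2 * w z) := by
    rw [hA, st18_int_eq_ball (fun z hz => by rw [hη03 z hz]; ring)]
    calc |∫ z in ball (0:ℂ) 3, η z * (fderiv ℝ (fun y => fderiv ℝ w y 1) z 1 +
        fderiv ℝ (fun y => fderiv ℝ w y Complex.I) z Complex.I)|
        ≤ ∫ z in ball (0:ℂ) 3, |η z * (fderiv ℝ (fun y => fderiv ℝ w y 1) z 1 +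
          fderiv ℝ (fun y => fderiv ℝ w y Complex.I) z Complex.I)| :=
          st18_abs_int _ _
      _ ≤ ∫ z in ball (0:ℂ) 3, |fderiv ℝ (fun y => fderiv ℝ w y 1) z 1 +
          fderiv ℝ (fun y => fderiv ℝ w y Complex.I) z Complex.I| := by
          apply setIntegral_mono_on
          · exact st18_intOn ((hηc.mul hLc).abs) 3
          · exact st18_intOn hLc.abs 3
          · exact measurableSet_ball
          · intro z hz
            rw [abs_mul]
            apply mul_le_of_le_one_left (abs_nonneg _)
            rw [abs_of_nonneg (hηnn z)]; exact hηle z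
  -- gradient square bound
  have hPv2 : ∀ v : ℂ, ((fun z => (fderiv ℝ w z v) ^ 2) ≤ fun z =>
      (fderiv ℝ w z 1) ^ 2 + (fderiv ℝ w z Complex.I) ^ 2) →
      (∫ z in ball (0:ℂ) 3, (fderiv ℝ w z v) ^ 2) ≤ Cg := by
    intro v hvle
    calc (∫ z in ball (0:ℂ) 3, (fderiv ℝ w z v) ^ 2)
        ≤ ∫ z in ball (0:ℂ) 3, ((fderiv ℝ w z 1) ^ 2 + (fderiv ℝ w z Complex.I) ^ 2) := by
          apply setIntegral_mono_on
          · exact st18_intOn ((hPc v).pow 2) 3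
          · exact st18_intOn (((hPc 1).pow 2).add ((hPc Complex.I).pow 2)) 3
          · exact measurableSet_ball
          · exact fun z _ => hvle z
      _ = ∫ z in ball (0:ℂ) 3, ‖gradient w z‖ ^ 2 := by
          refine setIntegral_congr_fun measurableSet_ball fun z _ => ?_
          exact (st18_grad hwd z).symm
      _ ≤ Cg := hCg
  have hBnn : 0 ≤ ∫ z in ball (0:ℂ) 3, (w z - c) ^ 2 :=
    setIntegral_nonneg measurableSet_ball fun z _ => sq_nonneg _
  -- bound on the V-terms
  have hV : ∀ v : ℂ, ‖v‖ = 1 →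
      ((fun z => (fderiv ℝ w z v) ^ 2) ≤ fun z =>
        (fderiv ℝ w z 1) ^ 2 + (fderiv ℝ w z Complex.I) ^ 2) →
      |∫ z, (w z - c) * fderiv ℝ η z v * fderiv ℝ w z v| ≤
        (Mη * Real.sqrt Cg) * Real.sqrt (∫ z in ball (0:ℂ) 3, (w z - c) ^ 2) := by
    intro v hv hvle
    rw [st18_int_eq_ball (fun z hz => by rw [hη'03 z hz]; simp)]
    calc |∫ z in ball (0:ℂ) 3, (w z - c) * fderiv ℝ η z v * fderiv ℝ w z v|
        ≤ ∫ z in ball (0:ℂ) 3, |(w z - c) * fderiv ℝ η z v * fderiv ℝ w z v| :=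
          st18_abs_int _ _
      _ ≤ ∫ z in ball (0:ℂ) 3, Mη * (|w z - c| * |fderiv ℝ w z v|) := by
          apply setIntegral_mono_on
          · exact st18_intOn ((((hwc.sub continuous_const).mul (hη'c v)).mul (hPc v)).abs) 3
          · exact st18_intOn (continuous_const.mul
              (((hwc.sub continuous_const).abs).mul ((hPc v).abs))) 3
          · exact measurableSet_ball
          · intro z hz
            rw [abs_mul, abs_mul]
            calc |w z - c| * |fderiv ℝ η z v| * |fderiv ℝ w z v|
                ≤ |w z - c| * Mη * |fderiv ℝ w z v| := by
                  apply mul_le_mul_of_nonneg_right _ (abs_nonneg _)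
                  exact mul_le_mul_of_nonneg_left (hMηv z v hv) (abs_nonneg _)
              _ = Mη * (|w z - c| * |fderiv ℝ w z v|) := by ring
      _ = Mη * ∫ z in ball (0:ℂ) 3, |w z - c| * |fderiv ℝ w z v| := integral_const_mul _ _
      _ ≤ Mη * (Real.sqrt (∫ z in ball (0:ℂ) 3, (w z - c) ^ 2) *
            Real.sqrt (∫ z in ball (0:ℂ) 3, (fderiv ℝ w z v) ^ 2)) := by
          apply mul_le_mul_of_nonneg_left _ hMη0
          exact st18_CS (hwc.sub continuous_const) (hPc v)
      _ ≤ Mη * (Real.sqrt (∫ z in ball (0:ℂ) 3, (w z - c) ^ 2) * Real.sqrt Cg) := by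
          apply mul_le_mul_of_nonneg_left _ hMη0
          apply mul_le_mul_of_nonneg_left _ (Real.sqrt_nonneg _)
          exact Real.sqrt_le_sqrt (hPv2 v hvle)
      _ = (Mη * Real.sqrt Cg) * Real.sqrt (∫ z in ball (0:ℂ) 3, (w z - c) ^ 2) := by ring
  -- combine everything
  have b1 := abs_le.1 hW1
  have b2 := abs_le.1 (hV 1 (by simp) (fun z => le_add_of_nonneg_right (sq_nonneg _)))
  have b3 := abs_le.1 (hV Complex.I (by simp) (fun z => le_add_of_nonneg_left (sq_nonneg _)))
  have b4 : |c * ∫ z, η z * (fderiv ℝ (fun y => fderiv ℝ w y 1) z 1 +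
      fderiv ℝ (fun y => fderiv ℝ w y Complex.I) z Complex.I)| ≤
      |c| * ∫ z in ball (0:ℂ) 3, |Kf z| * Real.exp (2 * w z) := by
    rw [abs_mul]
    exact mul_le_mul_of_nonneg_left hW2 (abs_nonneg c)
  have b4' := abs_le.1 b4
  rw [hEeq, abs_le]
  constructor
  · linarith [b1.1, b1.2, b2.1, b2.2, b3.1, b3.2, b4'.1, b4'.2]
  · linarith [b1.1, b1.2, b2.1, b2.2, b3.1, b3.2, b4'.1, b4'.2]

theorem stmt_18 (ε₀ : ℝ) (hε₀ : 0 < ε₀)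
    (u : ℕ → ℂ → ℝ) (K : ℕ → ℂ → ℝ) (u' : ℂ → ℝ)
    (hsm : ∀ k, ContDiff ℝ 2 (u k))
    -- the equation `−Δu_k = K_k e^{2u_k}`
    (heq : ∀ k z, -lapC (u k) z = K k z * Real.exp (2 * u k z))
    -- `u'` is constant
    (hconst : ∃ c : ℝ, ∀ z, u' z = c)
    -- `K_k e^{2u_k} → 0` in `L¹_loc`
    (hL1 : ∀ R : ℝ, 0 < R →
      Tendsto (fun k => ∫ z in ball (0 : ℂ) R, |K k z| * Real.exp (2 * u k z)) atTop (nhds 0))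
    -- `u_k → u'` strongly in `L²_loc`
    (hL2 : ∀ R : ℝ, 0 < R →
      Tendsto (fun k => ∫ z in ball (0 : ℂ) R, (u k z - u' z) ^ 2) atTop (nhds 0))
    -- local uniform (`L^∞_loc`) bounds on `u_k`
    (hLinf : ∀ R : ℝ, 0 < R → ∃ C : ℝ, ∀ k, ∀ z ∈ ball (0 : ℂ) R, |u k z| ≤ C)
    -- local `W^{1,2}` bounds (weak `W^{1,2}_loc` convergence)
    (hW12 : ∀ R : ℝ, 0 < R → ∃ C : ℝ, ∀ k,
      (∫ z in ball (0 : ℂ) R, ‖gradient (u k) z‖ ^ 2) ≤ C)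
    -- the energy lower bound on the unit disc
    (hen : ∀ k, ε₀ ^ 2 ≤ ∫ z in ball (0 : ℂ) 1, ‖gradient (u k) z‖ ^ 2) :
    False := by
  obtain ⟨c, hc⟩ := hconst
  -- the cutoff function
  set φ : ContDiffBump (0:ℂ) := ⟨1, 2, one_pos, one_lt_two⟩ with hφdef
  set η : ℂ → ℝ := fun z => φ z with hηdef
  have hηsm : ContDiff ℝ 2 η := φ.contDiff
  have hηc : Continuous η := hηsm.continuous
  have hηnn : ∀ z, 0 ≤ η z := fun z => φ.nonneg
  have hηle : ∀ z, η z ≤ 1 := fun z => φ.le_one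
  have hηone : ∀ z ∈ ball (0:ℂ) 1, η z = 1 := fun z hz =>
    φ.one_of_mem_closedBall (ball_subset_closedBall hz)
  have hη02 : ∀ z : ℂ, (2:ℝ) ≤ ‖z‖ → η z = 0 := fun z hz =>
    φ.zero_of_le_dist (by simpa [dist_eq_norm] using hz)
  -- bound on the derivative of the cutoff
  have hfdc : Continuous fun z => fderiv ℝ η z :=
    (hηsm.fderiv_right (m := 1) (by norm_num)).continuous
  have hη'03 : ∀ z : ℂ, (3:ℝ) ≤ ‖z‖ → fderiv ℝ η z = 0 := fun z hz =>
    st18_fderiv_zero fun y hy => hη02 y (st18_norm_ge hz hy)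
  obtain ⟨Mη, hMη⟩ := (hfdc.norm).bounded_above_of_compact_support
    (HasCompactSupport.intro (isCompact_closedBall (0:ℂ) 3) fun z hz => by
      rw [hη'03 z (le_of_lt (by simpa [Metric.mem_closedBall, dist_eq_norm] using hz))]; simp)
  have hMη0 : 0 ≤ Mη := le_trans (norm_nonneg _) (hMη 0)
  have hMηv : ∀ (z v : ℂ), ‖v‖ = 1 → |fderiv ℝ η z v| ≤ Mη := fun z v hv => by
    calc |fderiv ℝ η z v| = ‖fderiv ℝ η z v‖ := (Real.norm_eq_abs _).symm
      _ ≤ ‖fderiv ℝ η z‖ * ‖v‖ := (fderiv ℝ η z).le_opNorm v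
      _ ≤ Mη := by rw [hv, mul_one]; simpa using hMη z
  -- constants
  obtain ⟨C₃, hC₃⟩ := hLinf 3 (by norm_num)
  obtain ⟨Cg, hCg⟩ := hW12 3 (by norm_num)
  -- the two convergent sequences
  have ha := hL1 3 (by norm_num)
  have hb := hL2 3 (by norm_num)
  simp_rw [hc] at hb
  have hsb : Tendsto (fun k => Real.sqrt (∫ z in ball (0:ℂ) 3, (u k z - c) ^ 2))
      atTop (nhds 0) := by
    simpa [Function.comp_def] using (Real.continuous_sqrt.continuousAt (x := 0)).tendsto.comp hb
  -- the energy and its bounds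
  have key1 : ∀ k, ε₀ ^ 2 ≤
      ∫ z, η z * ((fderiv ℝ (u k) z 1) ^ 2 + (fderiv ℝ (u k) z Complex.I) ^ 2) := fun k =>
    le_trans (hen k) (st18_lower η hηc hηnn hηone hη02 (u k) (hsm k))
  have key2 : ∀ k, |∫ z, η z * ((fderiv ℝ (u k) z 1) ^ 2 + (fderiv ℝ (u k) z Complex.I) ^ 2)| ≤
      C₃ * (∫ z in ball (0 : ℂ) 3, |K k z| * Real.exp (2 * u k z))
      + |c| * (∫ z in ball (0 : ℂ) 3, |K k z| * Real.exp (2 * u k z))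
      + (Mη * Real.sqrt Cg) * Real.sqrt (∫ z in ball (0:ℂ) 3, (u k z - c) ^ 2)
      + (Mη * Real.sqrt Cg) * Real.sqrt (∫ z in ball (0:ℂ) 3, (u k z - c) ^ 2) := fun k =>
    st18_upper η hηsm hηnn hηle hη02 Mη hMη0 hMηv (u k) (K k) (hsm k) (heq k)
      c C₃ Cg (hC₃ k) (hCg k)
  -- the bound tends to zero
  have hBlim : Tendsto (fun k =>
      C₃ * (∫ z in ball (0 : ℂ) 3, |K k z| * Real.exp (2 * u k z))
      + |c| * (∫ z in ball (0 : ℂ) 3, |K k z| * Real.exp (2 * u k z))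
      + (Mη * Real.sqrt Cg) * Real.sqrt (∫ z in ball (0:ℂ) 3, (u k z - c) ^ 2)
      + (Mη * Real.sqrt Cg) * Real.sqrt (∫ z in ball (0:ℂ) 3, (u k z - c) ^ 2))
      atTop (nhds 0) := by
    have := (((ha.const_mul C₃).add (ha.const_mul |c|)).add
      (hsb.const_mul (Mη * Real.sqrt Cg))).add (hsb.const_mul (Mη * Real.sqrt Cg))
    simpa [add_assoc] using this
  have hE0 : Tendsto (fun k =>
      ∫ z, η z * ((fderiv ℝ (u k) z 1) ^ 2 + (fderiv ℝ (u k) z Complex.I) ^ 2))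
      atTop (nhds 0) :=
    squeeze_zero_norm (fun k => by simpa [Real.norm_eq_abs] using key2 k) hBlim
  have : ε₀ ^ 2 ≤ 0 := ge_of_tendsto' hE0 key1
  nlinarith
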